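/- One-step predictive distribution is Student t (the Gosset rule): let n ≥ 2 be an integer, p real with ν := n + p − 2 > 0, and y ∈ ℝⁿ with Q(y) > 0. Set c = √(Q(y)(n+1)/(n ν)). Then for every x ∈ ℝ, λ_{n+1,p}(y_1, …, y_n, x) / λ_{n,p}(y) = (1/c) · [Γ((ν+1)/2) / (√(πν) Γ(ν/2))] · (1 + ((x − ȳ)/c)²/ν)^{−(ν+1)/2}, i.e., the ratio is the density at x of ȳ + c·T where T has the Student t distribution on ν degrees of freedom. -/

import Mathlib

open MeasureTheory
open scoped ENNReal

/-- `Q(z) = ∑ᵢ (zᵢ - z̄)²` where `z̄` is the mean of the coordinates. -/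
noncomputable def Qstat (m : ℕ) (z : Fin m → ℝ) : ℝ :=
  ∑ i, (z i - (∑ j, z j) / m) ^ 2

/-- The closed-form Gaussian intensity
`λ_{m,p}(z) = Γ((m+p-2)/2) 2^{(p-3)/2} π^{-(m-1)/2} m^{-1/2} / Q(z)^{(m+p-2)/2}`. -/
noncomputable def lamClosed (m : ℕ) (p : ℝ) (z : Fin m → ℝ) : ℝ :=
  Real.Gamma (((m : ℝ) + p - 2) / 2) * (2 : ℝ) ^ ((p - 3) / 2) *
    Real.pi ^ (-((m : ℝ) - 1) / 2) * (m : ℝ) ^ (-(1 : ℝ) / 2) /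
      Qstat m z ^ (((m : ℝ) + p - 2) / 2)

/-- The Student t density on `ν > 0` degrees of freedom:
`g_ν(t) = Γ((ν+1)/2) / (√(πν) Γ(ν/2)) (1 + t²/ν)^{-(ν+1)/2}`. -/
noncomputable def studentDensity (ν t : ℝ) : ℝ :=
  Real.Gamma ((ν + 1) / 2) / (Real.sqrt (Real.pi * ν) * Real.Gamma (ν / 2)) *
    (1 + t ^ 2 / ν) ^ (-(ν + 1) / 2)

lemma Qstat_formula (m : ℕ) (hm : (m:ℝ) ≠ 0) (z : Fin m → ℝ) :
    Qstat m z = (∑ i, z i ^ 2) - (∑ i, z i)^2 / m := by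
  unfold Qstat
  rw [Finset.sum_congr rfl (fun i _ =>
    show (z i - (∑ j, z j)/m)^2 = z i^2 - 2*((∑ j, z j)/m)*z i + ((∑ j, z j)/m)^2 by ring)]
  rw [Finset.sum_add_distrib, Finset.sum_sub_distrib, ← Finset.mul_sum,
    Finset.sum_const, Finset.card_univ, Fintype.card_fin, nsmul_eq_mul]
  field_simp
  ring

lemma Qstat_snoc (n : ℕ) (hn : (n:ℝ) ≠ 0) (y : Fin n → ℝ) (x : ℝ) :
    Qstat (n+1) (Fin.snoc y x) =
      Qstat n y + (n:ℝ)/((n:ℝ)+1) * (x - (∑ i, y i)/n)^2 := by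
  have hn1 : ((n:ℝ)+1) ≠ 0 := by positivity
  rw [Qstat_formula (n+1) (by push_cast; positivity) _, Qstat_formula n hn y]
  simp only [Fin.sum_univ_castSucc, Fin.snoc_castSucc, Fin.snoc_last]
  push_cast
  field_simp
  ring

lemma rpow_alg (A B ν nr c G1 G0 tp : ℝ) (hA : 0 < A) (hB : 0 < B) (hν : 0 < ν)
    (hn : 0 < nr) (hG1 : 0 < G1) (hG0 : 0 < G0) (htp : 0 < tp)
    (hc : c = Real.sqrt (A * (nr + 1) / (nr * ν))) :
    G1 * tp * Real.pi ^ (-(nr + 1 - 1) / 2) * (nr + 1) ^ (-(1:ℝ) / 2) / B ^ ((ν + 1) / 2) /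
      (G0 * tp * Real.pi ^ (-(nr - 1) / 2) * nr ^ (-(1:ℝ) / 2) / A ^ (ν / 2)) =
    1 / c * (G1 / (Real.sqrt (Real.pi * ν) * G0) * (B / A) ^ (-(ν + 1) / 2)) := by
  have hπ := Real.pi_pos
  have hn1 : (0:ℝ) < nr + 1 := by linarith
  rw [Real.sqrt_eq_rpow, Real.mul_rpow hπ.le hν.le]
  rw [hc, Real.sqrt_eq_rpow, Real.div_rpow (by positivity) (by positivity),
    Real.mul_rpow hA.le hn1.le, Real.mul_rpow hn.le hν.le]
  rw [show -(nr + 1 - 1) / 2 = -(nr - 1) / 2 + -(1 / 2 : ℝ) by ring,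
    Real.rpow_add hπ, Real.rpow_neg hπ.le]
  rw [show (-(1:ℝ)/2) = -(1/2 : ℝ) by ring, Real.rpow_neg hn1.le, Real.rpow_neg hn.le]
  rw [show -(ν + 1) / 2 = -((ν + 1) / 2) by ring, Real.rpow_neg (by positivity),
    Real.div_rpow hB.le hA.le]
  rw [show (ν + 1) / 2 = ν / 2 + 1 / 2 by ring, Real.rpow_add hA, Real.rpow_add hB]
  have h1 : Real.pi ^ ((1:ℝ)/2) ≠ 0 := ne_of_gt (Real.rpow_pos_of_pos hπ _)
  have h2 : (nr + 1) ^ ((1:ℝ)/2) ≠ 0 := ne_of_gt (Real.rpow_pos_of_pos hn1 _)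
  have h3 : nr ^ ((1:ℝ)/2) ≠ 0 := ne_of_gt (Real.rpow_pos_of_pos hn _)
  have h4 : ν ^ ((1:ℝ)/2) ≠ 0 := ne_of_gt (Real.rpow_pos_of_pos hν _)
  have h5 : A ^ ((1:ℝ)/2) ≠ 0 := ne_of_gt (Real.rpow_pos_of_pos hA _)
  have h6 : A ^ (ν/2) ≠ 0 := ne_of_gt (Real.rpow_pos_of_pos hA _)
  have h7 : B ^ (ν/2) ≠ 0 := ne_of_gt (Real.rpow_pos_of_pos hB _)
  have h8 : B ^ ((1:ℝ)/2) ≠ 0 := ne_of_gt (Real.rpow_pos_of_pos hB _)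
  have h9 : Real.pi ^ (-(nr - 1) / 2) ≠ 0 := ne_of_gt (Real.rpow_pos_of_pos hπ _)
  field_simp

/-- The Gosset rule: with `ν = n + p - 2 > 0` and `c = √(Q(y)(n+1)/(nν))`, the
one-step predictive ratio `λ_{n+1,p}(y,x)/λ_{n,p}(y)` is the density at `x` of
`ȳ + c T`, where `T` is Student t on `ν` degrees of freedom. -/
theorem gosset_rule (n : ℕ) (hn : 2 ≤ n) (p : ℝ) (hν : 0 < (n : ℝ) + p - 2)
    (y : Fin n → ℝ) (hQ : 0 < Qstat n y) (x : ℝ)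
    (ν : ℝ) (hνdef : ν = (n : ℝ) + p - 2)
    (c : ℝ) (hcdef : c = Real.sqrt (Qstat n y * ((n : ℝ) + 1) / ((n : ℝ) * ν))) :
    lamClosed (n + 1) p (Fin.snoc y x) / lamClosed n p y =
      (1 / c) * studentDensity ν ((x - (∑ i, y i) / (n : ℝ)) / c) := by
  have hn0 : (0:ℝ) < n := by
    have : 0 < n := by omega
    exact_mod_cast this
  have hν' : 0 < ν := hνdef ▸ hν
  have hc0 : 0 < c := by
    rw [hcdef]; exact Real.sqrt_pos.mpr (by positivity)
  have hc2 : c ^ 2 = Qstat n y * ((n:ℝ) + 1) / ((n:ℝ) * ν) := by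
    rw [hcdef, Real.sq_sqrt (by positivity)]
  have hB := Qstat_snoc n (ne_of_gt hn0) y x
  have hB0 : 0 < Qstat (n+1) (Fin.snoc y x) := by rw [hB]; positivity
  have hratio : 1 + ((x - (∑ i, y i) / (n:ℝ)) / c) ^ 2 / ν
      = Qstat (n+1) (Fin.snoc y x) / Qstat n y := by
    rw [hB, div_pow, hc2]
    field_simp
  unfold lamClosed studentDensity
  rw [hratio]
  push_cast
  rw [show ((n:ℝ) + 1 + p - 2) / 2 = (ν + 1) / 2 by rw [hνdef]; ring,
    show ((n:ℝ) + p - 2) / 2 = ν / 2 by rw [hνdef]]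
  exact rpow_alg _ _ _ _ _ _ _ _ hQ hB0 hν' hn0
    (Real.Gamma_pos_of_pos (by linarith)) (Real.Gamma_pos_of_pos (by linarith))
    (Real.rpow_pos_of_pos two_pos _)
    (by rw [hcdef, hνdef])
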